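/- Let g : ℝ → ℝ be differentiable and nonexpansive, and set μ := inf of g' over ℝ. Then the modulus of averagedness of g equals (1 - μ)/2; i.e., for κ ∈ (0,1], g is κ-averaged if and only if κ ≥ (1 - μ)/2. -/

import Mathlib

open Set

def Nonexpansive (T : ℝ → ℝ) : Prop := ∀ x y, ‖T x - T y‖ ≤ ‖x - y‖

def IsAveraged (T : ℝ → ℝ) (κ : ℝ) : Prop :=
  ∃ N : ℝ → ℝ, Nonexpansive N ∧ ∀ x, T x = (1 - κ) • x + κ • N x

theorem modulus_of_real_function (g : ℝ → ℝ) (hg : Differentiable ℝ g)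
    (hg' : ∀ x : ℝ, |deriv g x| ≤ 1) (μ : ℝ) (hμ : μ = ⨅ x : ℝ, deriv g x)
    (κ : ℝ) (hκ : κ ∈ Ioc (0 : ℝ) 1) :
    IsAveraged g κ ↔ (1 - μ) / 2 ≤ κ := by
  obtain ⟨hκ0, hκ1⟩ := hκ
  have hbdd : BddBelow (Set.range fun x : ℝ => deriv g x) := by
    refine ⟨-1, ?_⟩
    rintro _ ⟨x, rfl⟩
    have := abs_le.1 (hg' x)
    linarith [this.1]
  -- h is g minus the identity part
  set h : ℝ → ℝ := fun x => g x - (1 - κ) * x with hh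
  have hdiff : Differentiable ℝ h := hg.sub (differentiable_id.const_mul _)
  have hderiv : ∀ x, deriv h x = deriv g x - (1 - κ) := by
    intro x
    have : HasDerivAt h (deriv g x - (1 - κ) * 1) x :=
      (hg x).hasDerivAt.sub ((hasDerivAt_id x).const_mul (1 - κ))
    rw [this.deriv]; ring
  constructor
  · rintro ⟨N, hN, hrep⟩
    have hlip : LipschitzWith κ.toNNReal h := by
      apply LipschitzWith.of_dist_le_mul
      intro x y
      have : h x - h y = κ * (N x - N y) := by
        simp only [hh]
        rw [hrep x, hrep y]; simp [smul_eq_mul]; ring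
      rw [Real.dist_eq, Real.dist_eq, this, abs_mul, abs_of_pos hκ0,
        Real.coe_toNNReal _ hκ0.le]
      exact mul_le_mul_of_nonneg_left (hN x y) hκ0.le
    have key : ∀ x, 1 - 2 * κ ≤ deriv g x := by
      intro x
      have := (hdiff x).hasDerivAt.le_of_lipschitz hlip
      rw [hderiv x, Real.norm_eq_abs, Real.coe_toNNReal _ hκ0.le] at this
      have := abs_le.1 this
      linarith [this.1]
    have : 1 - 2 * κ ≤ μ := by
      rw [hμ]
      exact le_ciInf key
    linarith
  · intro hle
    have hμle : ∀ x, 1 - 2 * κ ≤ deriv g x := by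
      intro x
      have h1 : μ ≤ deriv g x := hμ ▸ ciInf_le hbdd x
      linarith
    have hlip : LipschitzWith κ.toNNReal h := by
      apply lipschitzWith_of_nnnorm_deriv_le hdiff
      intro x
      rw [← NNReal.coe_le_coe, coe_nnnorm, Real.norm_eq_abs, hderiv x,
        Real.coe_toNNReal _ hκ0.le, abs_le]
      have := abs_le.1 (hg' x)
      constructor <;> [linarith [hμle x]; linarith [this.2]]
    refine ⟨fun x => (g x - (1 - κ) * x) / κ, ?_, ?_⟩
    · intro x y
      have hd : (g x - (1 - κ) * x) / κ - (g y - (1 - κ) * y) / κ = (h x - h y) / κ := by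
        rw [hh]; ring
      rw [Real.norm_eq_abs, Real.norm_eq_abs, hd, abs_div, abs_of_pos hκ0,
        div_le_iff₀ hκ0]
      have := hlip.dist_le_mul x y
      rw [Real.dist_eq, Real.dist_eq, Real.coe_toNNReal _ hκ0.le] at this
      linarith
    · intro x
      simp only [smul_eq_mul]; field_simp; ring
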